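/- arXiv:1811.01351 — 2 statements merged into one kernel-verified Lean document; each statement's English description precedes it below -/
import Mathlib

section
/- Let I be an ideal of ℝ[x], let Q be an indexed set of polynomials, let c be a cut-off function for Q, and let w be a positive integer. If there is R ∈ ℝ, R ≥ 0, such that Q ⊢^{c,I}_{w,2} R − x² ≥ 0 for every variable x, then for every monomial m of degree at most 2d and every a ∈ ℝ there exists b ∈ ℝ, b ≥ 0, such that Q ⊢^{c,I}_{w,2d} a·m + b ≥ 0. -/
open MvPolynomial

noncomputable section

/-- The sum of squares of a list of polynomials. -/
def sosOfI {σ : Type} (l : List (MvPolynomial σ ℝ)) : MvPolynomial σ ℝ :=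
  (l.map (· ^ 2)).sum

/-- A Positivstellensatz proof mod the ideal `I` of `goal ≥ 0` from the inequality
constraints `q j ≥ 0` (`j : Fin ℓ`) and the equality constraints `p j = 0`
(`j : Fin m`). -/
structure PSProofMod (σ : Type) (ℓ m : ℕ) (q : Fin ℓ → MvPolynomial σ ℝ)
    (p : Fin m → MvPolynomial σ ℝ) (I : Ideal (MvPolynomial σ ℝ))
    (goal : MvPolynomial σ ℝ) : Type where
  Js : Finset (Finset (Fin ℓ))
  empty_not_mem : ∅ ∉ Js
  r0 : List (MvPolynomial σ ℝ)
  r : Finset (Fin ℓ) → List (MvPolynomial σ ℝ)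
  t : Fin m → MvPolynomial σ ℝ
  identity : goal - (sosOfI r0 + ∑ J ∈ Js, sosOfI (r J) * ∏ j ∈ J, q j
      + ∑ j, t j * p j) ∈ I

/-- A cut-off function for the system `q, p`. -/
def IsCutoffI {σ : Type} {ℓ m : ℕ} (q : Fin ℓ → MvPolynomial σ ℝ)
    (p : Fin m → MvPolynomial σ ℝ) (c : Finset (Fin ℓ) ⊕ Fin m → ℕ) : Prop :=
  (∀ J : Finset (Fin ℓ), ∑ j ∈ J, (q j).totalDegree ≤ c (Sum.inl J)) ∧
  (∀ j : Fin m, (p j).totalDegree ≤ c (Sum.inr j))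

/-- The proof has degree mod `c` at most `d` (the zero polynomial having
degree `−∞`). -/
def PSProofMod.degreeModLE {σ : Type} {ℓ m : ℕ} {q : Fin ℓ → MvPolynomial σ ℝ}
    {p : Fin m → MvPolynomial σ ℝ} {I : Ideal (MvPolynomial σ ℝ)}
    {goal : MvPolynomial σ ℝ} (π : PSProofMod σ ℓ m q p I goal)
    (c : Finset (Fin ℓ) ⊕ Fin m → ℕ) (d : ℕ) : Prop :=
  goal.totalDegree ≤ d ∧ (sosOfI π.r0).totalDegree ≤ d ∧
  (∀ J ∈ π.Js, sosOfI (π.r J) ≠ 0 → (sosOfI (π.r J)).totalDegree + c (Sum.inl J) ≤ d) ∧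
  (∀ j, π.t j ≠ 0 → (π.t j).totalDegree + c (Sum.inr j) ≤ d)

/-- The proof has product-width at most `w`. -/
def PSProofMod.widthLE {σ : Type} {ℓ m : ℕ} {q : Fin ℓ → MvPolynomial σ ℝ}
    {p : Fin m → MvPolynomial σ ℝ} {I : Ideal (MvPolynomial σ ℝ)}
    {goal : MvPolynomial σ ℝ} (π : PSProofMod σ ℓ m q p I goal) (w : ℕ) : Prop :=
  ∀ J ∈ π.Js, J.card ≤ w

/-- `PS^{c,I}_{w,d}(Q)`: the cone of polynomials of degree at most `d` with a PS
proof mod `I` of degree mod `c` at most `d` and product-width at most `w`.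
`Q ⊢^{c,I}_{w,d} a ≥ b` is expressed as `a - b ∈ PSconeI …`. -/
def PSconeI (σ : Type) (ℓ m : ℕ) (q : Fin ℓ → MvPolynomial σ ℝ)
    (p : Fin m → MvPolynomial σ ℝ) (I : Ideal (MvPolynomial σ ℝ))
    (c : Finset (Fin ℓ) ⊕ Fin m → ℕ) (w d : ℕ) : Set (MvPolynomial σ ℝ) :=
  {g | g.totalDegree ≤ d ∧
    ∃ π : PSProofMod σ ℓ m q p I g, π.degreeModLE c d ∧ π.widthLE w}

section Helpers

variable {σ : Type} {ℓ m : ℕ} {q : Fin ℓ → MvPolynomial σ ℝ}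
  {p : Fin m → MvPolynomial σ ℝ} {I : Ideal (MvPolynomial σ ℝ)}
  {c : Finset (Fin ℓ) ⊕ Fin m → ℕ} {w : ℕ}

lemma sosOfI_nil : sosOfI ([] : List (MvPolynomial σ ℝ)) = 0 := rfl

lemma sosOfI_append (l₁ l₂ : List (MvPolynomial σ ℝ)) :
    sosOfI (l₁ ++ l₂) = sosOfI l₁ + sosOfI l₂ := by
  simp [sosOfI]

lemma sosOfI_map_mul (h : MvPolynomial σ ℝ) (l : List (MvPolynomial σ ℝ)) :
    sosOfI (l.map (h * ·)) = h ^ 2 * sosOfI l := by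
  induction l with
  | nil => simp [sosOfI]
  | cons a l ih =>
    simp only [sosOfI, List.map_cons, List.sum_cons] at *
    rw [ih, mul_pow, mul_add]

lemma deg_add_helper {a b : MvPolynomial σ ℝ} {k d : ℕ}
    (ha : a ≠ 0 → a.totalDegree + k ≤ d) (hb : b ≠ 0 → b.totalDegree + k ≤ d)
    (hab : a + b ≠ 0) : (a + b).totalDegree + k ≤ d := by
  by_cases h1 : a = 0
  · rw [h1, zero_add] at hab ⊢; exact hb hab
  by_cases h2 : b = 0
  · rw [h2, add_zero] at hab ⊢; exact ha hab
  · have h3 := MvPolynomial.totalDegree_add a b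
    have h4 := ha h1
    have h5 := hb h2
    simp only [le_max_iff, sup_le_iff] at h3
    omega

lemma cone_zero (d : ℕ) : (0 : MvPolynomial σ ℝ) ∈ PSconeI σ ℓ m q p I c w d := by
  refine ⟨by simp, ⟨∅, Finset.notMem_empty _, [], fun _ => [], fun _ => 0, ?_⟩, ?_, ?_⟩
  · simp [sosOfI]
  · exact ⟨by simp, by simp [sosOfI], by simp, by simp⟩
  · intro J hJ; simp at hJ

lemma cone_mono {d₁ d₂ : ℕ} (h : d₁ ≤ d₂) {g : MvPolynomial σ ℝ}
    (hg : g ∈ PSconeI σ ℓ m q p I c w d₁) : g ∈ PSconeI σ ℓ m q p I c w d₂ := by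
  obtain ⟨hd, π, ⟨h1, h2, h3, h4⟩, hwd⟩ := hg
  exact ⟨hd.trans h, π, ⟨h1.trans h, h2.trans h,
    fun J hJ hne => (h3 J hJ hne).trans h, fun j hj => (h4 j hj).trans h⟩, hwd⟩

lemma cone_sq (f : MvPolynomial σ ℝ) {d : ℕ} (hf : f.totalDegree ≤ d) :
    f ^ 2 ∈ PSconeI σ ℓ m q p I c w (2 * d) := by
  have hdeg : (f ^ 2).totalDegree ≤ 2 * d :=
    (MvPolynomial.totalDegree_pow f 2).trans (by omega)
  refine ⟨hdeg, ⟨∅, Finset.notMem_empty _, [f], fun _ => [], fun _ => 0, ?_⟩, ?_, ?_⟩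
  · simp [sosOfI]
  · exact ⟨hdeg, by simpa [sosOfI] using hdeg, by simp, by simp⟩
  · intro J hJ; simp at hJ

lemma cone_add {g₁ g₂ : MvPolynomial σ ℝ} {d : ℕ}
    (hg₁ : g₁ ∈ PSconeI σ ℓ m q p I c w d) (hg₂ : g₂ ∈ PSconeI σ ℓ m q p I c w d) :
    g₁ + g₂ ∈ PSconeI σ ℓ m q p I c w d := by
  obtain ⟨hd₁, π₁, ⟨h11, h12, h13, h14⟩, hw₁⟩ := hg₁
  obtain ⟨hd₂, π₂, ⟨h21, h22, h23, h24⟩, hw₂⟩ := hg₂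
  set r' : Finset (Fin ℓ) → List (MvPolynomial σ ℝ) := fun J =>
    (if J ∈ π₁.Js then π₁.r J else []) ++ (if J ∈ π₂.Js then π₂.r J else []) with hr'
  have hs : ∀ J, sosOfI (r' J) = (if J ∈ π₁.Js then sosOfI (π₁.r J) else 0)
      + (if J ∈ π₂.Js then sosOfI (π₂.r J) else 0) := by
    intro J
    rw [hr']
    simp only []
    rw [sosOfI_append]
    congr 1 <;> split <;> simp [sosOfI]
  have key : ∀ (A : Finset (Finset (Fin ℓ))), A ⊆ π₁.Js ∪ π₂.Js →
      ∀ (f : Finset (Fin ℓ) → MvPolynomial σ ℝ),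
      ∑ J ∈ π₁.Js ∪ π₂.Js, (if J ∈ A then f J else 0) * ∏ j ∈ J, q j
        = ∑ J ∈ A, f J * ∏ j ∈ J, q j := by
    intro A hA f
    rw [← Finset.sum_subset hA (fun J _ hJ => by rw [if_neg hJ, zero_mul])]
    exact Finset.sum_congr rfl fun J hJ => by rw [if_pos hJ]
  have hsum : ∑ J ∈ π₁.Js ∪ π₂.Js, sosOfI (r' J) * ∏ j ∈ J, q j
      = (∑ J ∈ π₁.Js, sosOfI (π₁.r J) * ∏ j ∈ J, q j)
        + ∑ J ∈ π₂.Js, sosOfI (π₂.r J) * ∏ j ∈ J, q j := by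
    calc ∑ J ∈ π₁.Js ∪ π₂.Js, sosOfI (r' J) * ∏ j ∈ J, q j
        = ∑ J ∈ π₁.Js ∪ π₂.Js,
            ((if J ∈ π₁.Js then sosOfI (π₁.r J) else 0) * ∏ j ∈ J, q j
              + (if J ∈ π₂.Js then sosOfI (π₂.r J) else 0) * ∏ j ∈ J, q j) :=
          Finset.sum_congr rfl fun J _ => by rw [hs J, add_mul]
      _ = _ := by
          rw [Finset.sum_add_distrib, key _ Finset.subset_union_left _,
            key _ Finset.subset_union_right _]
  refine ⟨?_, ⟨π₁.Js ∪ π₂.Js, ?_, π₁.r0 ++ π₂.r0, r', fun j => π₁.t j + π₂.t j, ?_⟩,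
    ⟨?_, ?_, ?_, ?_⟩, ?_⟩
  · exact (MvPolynomial.totalDegree_add g₁ g₂).trans (max_le hd₁ hd₂)
  · simp [π₁.empty_not_mem, π₂.empty_not_mem]
  · -- identity
    have e : sosOfI (π₁.r0 ++ π₂.r0) + ∑ J ∈ π₁.Js ∪ π₂.Js, sosOfI (r' J) * ∏ j ∈ J, q j
        + ∑ j, (π₁.t j + π₂.t j) * p j
        = (sosOfI π₁.r0 + ∑ J ∈ π₁.Js, sosOfI (π₁.r J) * ∏ j ∈ J, q j + ∑ j, π₁.t j * p j)
          + (sosOfI π₂.r0 + ∑ J ∈ π₂.Js, sosOfI (π₂.r J) * ∏ j ∈ J, q j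
            + ∑ j, π₂.t j * p j) := by
      rw [sosOfI_append, hsum]
      have : ∑ j, (π₁.t j + π₂.t j) * p j = ∑ j, π₁.t j * p j + ∑ j, π₂.t j * p j := by
        rw [← Finset.sum_add_distrib]
        exact Finset.sum_congr rfl fun j _ => add_mul _ _ _
      rw [this]; ring
    rw [e]
    have : g₁ + g₂ - ((sosOfI π₁.r0 + ∑ J ∈ π₁.Js, sosOfI (π₁.r J) * ∏ j ∈ J, q j
        + ∑ j, π₁.t j * p j) + (sosOfI π₂.r0 + ∑ J ∈ π₂.Js, sosOfI (π₂.r J) * ∏ j ∈ J, q j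
        + ∑ j, π₂.t j * p j))
        = (g₁ - (sosOfI π₁.r0 + ∑ J ∈ π₁.Js, sosOfI (π₁.r J) * ∏ j ∈ J, q j
          + ∑ j, π₁.t j * p j)) + (g₂ - (sosOfI π₂.r0
          + ∑ J ∈ π₂.Js, sosOfI (π₂.r J) * ∏ j ∈ J, q j + ∑ j, π₂.t j * p j)) := by ring
    rw [this]
    exact I.add_mem π₁.identity π₂.identity
  · exact (MvPolynomial.totalDegree_add g₁ g₂).trans (max_le hd₁ hd₂)
  · rw [sosOfI_append]
    exact (MvPolynomial.totalDegree_add _ _).trans (max_le h12 h22)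
  · intro J hJ hne
    rw [hs J] at hne ⊢
    refine deg_add_helper ?_ ?_ hne
    · intro h0
      have hJ1 : J ∈ π₁.Js := by by_contra hn; rw [if_neg hn] at h0; exact h0 rfl
      rw [if_pos hJ1] at h0 ⊢
      exact h13 J hJ1 h0
    · intro h0
      have hJ2 : J ∈ π₂.Js := by by_contra hn; rw [if_neg hn] at h0; exact h0 rfl
      rw [if_pos hJ2] at h0 ⊢
      exact h23 J hJ2 h0
  · intro j hj
    exact deg_add_helper (h14 j) (h24 j) hj
  · intro J hJ
    rcases Finset.mem_union.mp hJ with h | h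
    · exact hw₁ J h
    · exact hw₂ J h

lemma cone_mul_sq (h : MvPolynomial σ ℝ) {e d : ℕ} (he : h.totalDegree ≤ e)
    {g : MvPolynomial σ ℝ} (hg : g ∈ PSconeI σ ℓ m q p I c w d) :
    h ^ 2 * g ∈ PSconeI σ ℓ m q p I c w (d + 2 * e) := by
  obtain ⟨hd, π, ⟨h1, h2, h3, h4⟩, hwd⟩ := hg
  have hh2 : (h ^ 2).totalDegree ≤ 2 * e :=
    (MvPolynomial.totalDegree_pow h 2).trans (by omega)
  have hmul : ∀ (f : MvPolynomial σ ℝ) (k : ℕ), f.totalDegree ≤ k →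
      (h ^ 2 * f).totalDegree ≤ k + 2 * e := by
    intro f k hf
    have := MvPolynomial.totalDegree_mul (h ^ 2) f
    omega
  refine ⟨hmul g d hd, ⟨π.Js, π.empty_not_mem, π.r0.map (h * ·),
    fun J => (π.r J).map (h * ·), fun j => h ^ 2 * π.t j, ?_⟩, ⟨?_, ?_, ?_, ?_⟩, ?_⟩
  · -- identity
    simp only [sosOfI_map_mul]
    have e1 : ∑ J ∈ π.Js, h ^ 2 * sosOfI (π.r J) * ∏ j ∈ J, q j
        = h ^ 2 * ∑ J ∈ π.Js, sosOfI (π.r J) * ∏ j ∈ J, q j := by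
      rw [Finset.mul_sum]
      exact Finset.sum_congr rfl fun J _ => by ring
    have e2 : ∑ j, h ^ 2 * π.t j * p j = h ^ 2 * ∑ j, π.t j * p j := by
      rw [Finset.mul_sum]
      exact Finset.sum_congr rfl fun j _ => by ring
    rw [e1, e2]
    have e3 : h ^ 2 * g - (h ^ 2 * sosOfI π.r0
        + h ^ 2 * ∑ J ∈ π.Js, sosOfI (π.r J) * ∏ j ∈ J, q j + h ^ 2 * ∑ j, π.t j * p j)
        = h ^ 2 * (g - (sosOfI π.r0 + ∑ J ∈ π.Js, sosOfI (π.r J) * ∏ j ∈ J, q j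
          + ∑ j, π.t j * p j)) := by ring
    rw [e3]
    exact Ideal.mul_mem_left _ _ π.identity
  · exact hmul g d hd
  · rw [sosOfI_map_mul]; exact hmul _ d h2
  · intro J hJ hne
    rw [sosOfI_map_mul] at hne ⊢
    have hne' : sosOfI (π.r J) ≠ 0 := right_ne_zero_of_mul hne
    have := h3 J hJ hne'
    have := hmul (sosOfI (π.r J)) _ le_rfl
    have := MvPolynomial.totalDegree_mul (h ^ 2) (sosOfI (π.r J))
    omega
  · intro j hj
    show (h ^ 2 * π.t j).totalDegree + c (Sum.inr j) ≤ d + 2 * e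
    have hne' : π.t j ≠ 0 := right_ne_zero_of_mul hj
    have := h4 j hne'
    have := MvPolynomial.totalDegree_mul (h ^ 2) (π.t j)
    omega
  · exact hwd

lemma cone_smul {b : ℝ} (hb : 0 ≤ b) {g : MvPolynomial σ ℝ} {d : ℕ}
    (hg : g ∈ PSconeI σ ℓ m q p I c w d) :
    C b * g ∈ PSconeI σ ℓ m q p I c w d := by
  have := cone_mul_sq (C (Real.sqrt b) : MvPolynomial σ ℝ)
    (le_of_eq (MvPolynomial.totalDegree_C _)) hg
  rw [← MvPolynomial.C_pow, Real.sq_sqrt hb] at this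
  simpa using this

end Helpers
section Helpers2

variable {σ : Type} {ℓ m : ℕ} {q : Fin ℓ → MvPolynomial σ ℝ}
  {p : Fin m → MvPolynomial σ ℝ} {I : Ideal (MvPolynomial σ ℝ)}
  {c : Finset (Fin ℓ) ⊕ Fin m → ℕ} {w : ℕ}

lemma exists_le_sum (α : σ →₀ ℕ) :
    ∀ k : ℕ, k ≤ (α.sum fun _ e => e) →
      ∃ β : σ →₀ ℕ, β ≤ α ∧ (β.sum fun _ e => e) = k := by
  intro k
  induction k with
  | zero => exact fun _ => ⟨0, zero_le, by simp⟩
  | succ k ih =>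
    intro hk
    obtain ⟨β, hβle, hβsum⟩ := ih (by omega)
    have hne : β ≠ α := by
      rintro rfl; omega
    have hv : ∃ v, β v < α v := by
      by_contra hcon
      push_neg at hcon
      exact hne (le_antisymm hβle (Finsupp.le_def.mpr hcon))
    obtain ⟨v, hv⟩ := hv
    refine ⟨β + Finsupp.single v 1, ?_, ?_⟩
    · rw [Finsupp.le_def]
      intro u
      rcases eq_or_ne u v with rfl | hu
      · simp only [Finsupp.add_apply, Finsupp.single_eq_same]; omega
      · simp only [Finsupp.add_apply, Finsupp.single_eq_of_ne' (Ne.symm hu), add_zero]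
        exact Finsupp.le_def.mp hβle u
    · rw [Finsupp.sum_add_index' (fun _ => rfl) (fun _ _ _ => rfl), hβsum,
        Finsupp.sum_single_index rfl]

lemma boundedPow (R : ℝ) (hR : 0 ≤ R)
    (hball : ∀ v : σ, (C R - X v ^ 2 : MvPolynomial σ ℝ) ∈ PSconeI σ ℓ m q p I c w 2) :
    ∀ (k : ℕ) (β : σ →₀ ℕ), (β.sum fun _ e => e) = k →
      (C (R ^ k) - (monomial β 1) ^ 2 : MvPolynomial σ ℝ)
        ∈ PSconeI σ ℓ m q p I c w (2 * k) := by
  intro k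
  induction k with
  | zero =>
    intro β hβ
    have hβ0 : β = 0 := by
      ext v
      by_cases hv : v ∈ β.support
      · exact (Finset.sum_eq_zero_iff.mp hβ) v hv
      · simpa using Finsupp.notMem_support_iff.mp hv
    rw [hβ0]
    have : (C (R ^ 0) - (monomial (0 : σ →₀ ℕ) 1) ^ 2 : MvPolynomial σ ℝ) = 0 := by
      simp [MvPolynomial.monomial_zero']
    rw [this]
    exact cone_zero _
  | succ k ih =>
    intro β hβ
    have hv : ∃ v, 0 < β v := by
      by_contra hcon
      push_neg at hcon
      have : β = 0 := by ext u; have := hcon u; simp only [Finsupp.coe_zero, Pi.zero_apply]; omega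
      rw [this] at hβ
      simp at hβ
    obtain ⟨v, hv⟩ := hv
    set β' := β - Finsupp.single v 1 with hβ'
    have hle : Finsupp.single v 1 ≤ β := Finsupp.single_le_iff.mpr hv
    have hadd : β' + Finsupp.single v 1 = β := tsub_add_cancel_of_le hle
    have hsum' : (β'.sum fun _ e => e) = k := by
      have := Finsupp.sum_add_index' (f := β') (g := Finsupp.single v 1)
        (h := fun (_ : σ) (e : ℕ) => e) (fun _ => rfl) (fun _ _ _ => rfl)
      rw [hadd, hβ, Finsupp.sum_single_index rfl] at this
      omega
    have hmon : (monomial β 1 : MvPolynomial σ ℝ) = X v * monomial β' 1 := by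
      rw [MvPolynomial.X, MvPolynomial.monomial_mul, one_mul, ← hadd, add_comm]
    have hid : (C (R ^ (k + 1)) - (monomial β 1) ^ 2 : MvPolynomial σ ℝ)
        = C (R ^ k) * (C R - X v ^ 2)
          + X v ^ 2 * (C (R ^ k) - (monomial β' 1) ^ 2) := by
      rw [hmon, pow_succ, map_mul]
      ring
    rw [hid]
    refine cone_add (cone_mono (by omega) (cone_smul (pow_nonneg hR k) (hball v))) ?_
    have h2 := cone_mul_sq (X v) (le_of_eq (MvPolynomial.totalDegree_X v))
      (ih β' hsum')
    have : 2 * k + 2 * 1 = 2 * (k + 1) := by ring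
    rw [this] at h2
    exact h2

end Helpers2
/-- **Lemma (bounded monomials).** If `Q ⊢^{c,I}_{w,2} R − x² ≥ 0` for every
variable `x` and some `R ≥ 0`, then for every monomial `m₀ = monomial α 1` of
degree at most `2d` and every `a ∈ ℝ` there is `b ≥ 0` with
`Q ⊢^{c,I}_{w,2d} a·m₀ + b ≥ 0`. -/
theorem statement14 (σ : Type) (ℓ m : ℕ) (q : Fin ℓ → MvPolynomial σ ℝ)
    (p : Fin m → MvPolynomial σ ℝ) (I : Ideal (MvPolynomial σ ℝ))
    (c : Finset (Fin ℓ) ⊕ Fin m → ℕ) (hc : IsCutoffI q p c) (w : ℕ) (hw : 0 < w)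
    (R : ℝ) (hR : 0 ≤ R)
    (hball : ∀ v : σ, (C R - X v ^ 2 : MvPolynomial σ ℝ) ∈ PSconeI σ ℓ m q p I c w 2)
    (d : ℕ) (α : σ →₀ ℕ) (hα : (α.sum fun _ e => e) ≤ 2 * d) (a : ℝ) :
    ∃ b : ℝ, 0 ≤ b ∧
      (C a * (monomial α 1 : MvPolynomial σ ℝ) + C b)
        ∈ PSconeI σ ℓ m q p I c w (2 * d) := by
  set kα := α.sum fun _ e => e with hkα
  obtain ⟨β, hβle, hβsum⟩ := exists_le_sum α (min d kα) (min_le_right _ _)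
  set γ := α - β with hγdef
  have hβγ : β + γ = α := add_tsub_cancel_of_le hβle
  set kβ := β.sum fun _ e => e with hkβ
  set kγ := γ.sum fun _ e => e with hkγ
  have hsum : kβ + kγ = kα := by
    rw [hkα, ← hβγ, Finsupp.sum_add_index' (fun _ => rfl) (fun _ _ _ => rfl)]
  have hβd : kβ ≤ d := by omega
  have hγd : kγ ≤ d := by omega
  set ε : ℝ := if 0 ≤ a then 1 else -1 with hε
  have hε2 : ε ^ 2 = 1 := by rw [hε]; split <;> norm_num
  have hεa : ε * |a| = a := by
    rw [hε]; split
    · rw [abs_of_nonneg ‹_›]; ring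
    · rw [abs_of_neg (lt_of_not_ge ‹_›)]; ring
  set h := |a| / 2 with hh
  have hh0 : 0 ≤ h := by positivity
  refine ⟨h * R ^ kβ + h * R ^ kγ, by positivity, ?_⟩
  have hm1 : ((monomial β 1 + C ε * monomial γ 1 : MvPolynomial σ ℝ)).totalDegree ≤ d := by
    refine (MvPolynomial.totalDegree_add _ _).trans (max_le ?_ ?_)
    · rw [MvPolynomial.totalDegree_monomial β one_ne_zero]; exact hβd
    · refine (MvPolynomial.totalDegree_mul _ _).trans ?_
      rw [MvPolynomial.totalDegree_C, MvPolynomial.totalDegree_monomial γ one_ne_zero]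
      omega
  have c1 : C h * ((monomial β 1 + C ε * monomial γ 1 : MvPolynomial σ ℝ)) ^ 2
      ∈ PSconeI σ ℓ m q p I c w (2 * d) := cone_smul hh0 (cone_sq _ hm1)
  have c2 : C h * (C (R ^ kβ) - (monomial β 1 : MvPolynomial σ ℝ) ^ 2)
      ∈ PSconeI σ ℓ m q p I c w (2 * d) :=
    cone_smul hh0 (cone_mono (by omega) (boundedPow R hR hball kβ β rfl))
  have c3 : C h * (C (R ^ kγ) - (monomial γ 1 : MvPolynomial σ ℝ) ^ 2)
      ∈ PSconeI σ ℓ m q p I c w (2 * d) :=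
    cone_smul hh0 (cone_mono (by omega) (boundedPow R hR hball kγ γ rfl))
  have e1 : (C ε : MvPolynomial σ ℝ) ^ 2 = 1 := by rw [← map_pow, hε2, map_one]
  have e2 : (C a : MvPolynomial σ ℝ) = C ε * (C h + C h) := by
    rw [← map_add, ← map_mul]
    congr 1
    rw [show h + h = |a| by rw [hh]; ring, hεa]
  have e3 : (monomial β 1 : MvPolynomial σ ℝ) * monomial γ 1 = monomial α 1 := by
    rw [MvPolynomial.monomial_mul, one_mul, hβγ]
  have e4 : (C (h * R ^ kβ + h * R ^ kγ) : MvPolynomial σ ℝ)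
      = C h * C (R ^ kβ) + C h * C (R ^ kγ) := by rw [map_add, map_mul, map_mul]
  have key : C a * (monomial α 1 : MvPolynomial σ ℝ) + C (h * R ^ kβ + h * R ^ kγ)
      = C h * (monomial β 1 + C ε * monomial γ 1) ^ 2
        + (C h * (C (R ^ kβ) - (monomial β 1) ^ 2)
          + C h * (C (R ^ kγ) - (monomial γ 1) ^ 2)) := by
    rw [e2, e4, ← e3]
    linear_combination (-(C h * (monomial γ 1 : MvPolynomial σ ℝ) ^ 2)) * e1
  rw [key]
  exact cone_add c1 (cone_add c2 c3)
end
end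

section
/- Let d be a positive integer, let Q be an indexed set of polynomials, let c be a cut-off function for Q, let w be a positive integer, let I be an ideal of ℝ[x], and let p be a polynomial of degree at most 2d. If Q ⊢^{c,I}_{w,2} R − x² ≥ 0 for every variable x for some R ∈ ℝ, R ≥ 0, then sup{r ∈ ℝ : Q ⊢^{c,I}_{w,2d} p ≥ r} = inf{E(p) : E ∈ ℰ^{c,I}_{w,2d}(Q)} (as elements of ℝ ∪ {±∞}). Moreover, if the set ℰ^{c,I}_{w,2d}(Q) is nonempty, then there is a pseudo-expectation achieving the infimum, i.e., min{E(p) : E ∈ ℰ^{c,I}_{w,2d}(Q)} is well-defined. -/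
open MvPolynomial

noncomputable section

/-- `ℰ^{c,I}_{w,d}(Q)`: pseudo-expectations, i.e. linear functionals on the space
of polynomials of degree at most `d` sending `1` to `1` and the cone to
nonnegatives. -/
def PseudoExpI (σ : Type) (ℓ m : ℕ) (q : Fin ℓ → MvPolynomial σ ℝ)
    (p : Fin m → MvPolynomial σ ℝ) (I : Ideal (MvPolynomial σ ℝ))
    (c : Finset (Fin ℓ) ⊕ Fin m → ℕ) (w d : ℕ) :
    Set ((restrictTotalDegree σ ℝ d) →ₗ[ℝ] ℝ) :=
  {E | (∀ g : restrictTotalDegree σ ℝ d, (g : MvPolynomial σ ℝ) = 1 → E g = 1) ∧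
    (∀ g : restrictTotalDegree σ ℝ d,
      (g : MvPolynomial σ ℝ) ∈ PSconeI σ ℓ m q p I c w d → 0 ≤ E g)}


namespace PSAux

variable {σ : Type} {ℓ m : ℕ} {q : Fin ℓ → MvPolynomial σ ℝ}
  {p : Fin m → MvPolynomial σ ℝ} {I : Ideal (MvPolynomial σ ℝ)}
  {c : Finset (Fin ℓ) ⊕ Fin m → ℕ} {w : ℕ}

lemma sos_nil : sosOfI ([] : List (MvPolynomial σ ℝ)) = 0 := rfl

lemma sos_cons (a : MvPolynomial σ ℝ) (l) : sosOfI (a :: l) = a ^ 2 + sosOfI l := by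
  simp [sosOfI]

lemma sos_append (l1 l2 : List (MvPolynomial σ ℝ)) :
    sosOfI (l1 ++ l2) = sosOfI l1 + sosOfI l2 := by
  simp [sosOfI]

lemma sos_map_mul (f : MvPolynomial σ ℝ) (l) :
    sosOfI (l.map (f * ·)) = f ^ 2 * sosOfI l := by
  induction l with
  | nil => simp [sosOfI]
  | cons a l ih => simp only [List.map_cons, sos_cons, ih]; ring

lemma mem_cone_of {D : ℕ} {g : MvPolynomial σ ℝ} (hdeg : g.totalDegree ≤ D)
    (Js : Finset (Finset (Fin ℓ))) (hJs : ∅ ∉ Js)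
    (r0 : List (MvPolynomial σ ℝ)) (r : Finset (Fin ℓ) → List (MvPolynomial σ ℝ))
    (t : Fin m → MvPolynomial σ ℝ)
    (hid : g - (sosOfI r0 + ∑ J ∈ Js, sosOfI (r J) * ∏ j ∈ J, q j + ∑ j, t j * p j) ∈ I)
    (hs0 : (sosOfI r0).totalDegree ≤ D)
    (hsJ : ∀ J ∈ Js, sosOfI (r J) ≠ 0 → (sosOfI (r J)).totalDegree + c (Sum.inl J) ≤ D)
    (ht : ∀ j, t j ≠ 0 → (t j).totalDegree + c (Sum.inr j) ≤ D)
    (hwd : ∀ J ∈ Js, J.card ≤ w) : g ∈ PSconeI σ ℓ m q p I c w D :=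
  ⟨hdeg, ⟨Js, hJs, r0, r, t, hid⟩, ⟨hdeg, hs0, hsJ, ht⟩, hwd⟩

lemma deg_add_le {a b : MvPolynomial σ ℝ} {k D : ℕ} (ha : a ≠ 0 → a.totalDegree + k ≤ D)
    (hb : b ≠ 0 → b.totalDegree + k ≤ D) (h : a + b ≠ 0) : (a + b).totalDegree + k ≤ D := by
  by_cases ha0 : a = 0
  · rw [ha0, zero_add] at h ⊢; exact hb h
  by_cases hb0 : b = 0
  · rw [hb0, add_zero] at h ⊢; exact ha ha0
  have hm := totalDegree_add a b
  rcases le_total a.totalDegree b.totalDegree with hle | hle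
  · rw [max_eq_right hle] at hm; exact le_trans (Nat.add_le_add_right hm k) (hb hb0)
  · rw [max_eq_left hle] at hm; exact le_trans (Nat.add_le_add_right hm k) (ha ha0)

lemma cone_zero (D : ℕ) : (0 : MvPolynomial σ ℝ) ∈ PSconeI σ ℓ m q p I c w D := by
  refine mem_cone_of (by simp) ∅ (Finset.notMem_empty _) [] (fun _ => []) (fun _ => 0)
    (by simp [sos_nil]) (by simp [sos_nil]) (by simp) (by simp) (by simp)

lemma cone_add {g1 g2 : MvPolynomial σ ℝ} {D : ℕ}
    (h1 : g1 ∈ PSconeI σ ℓ m q p I c w D) (h2 : g2 ∈ PSconeI σ ℓ m q p I c w D) :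
    g1 + g2 ∈ PSconeI σ ℓ m q p I c w D := by
  obtain ⟨hd1, π1, ⟨hg1, hs1, hJ1, ht1⟩, hw1⟩ := h1
  obtain ⟨hd2, π2, ⟨hg2, hs2, hJ2, ht2⟩, hw2⟩ := h2
  classical
  refine mem_cone_of (le_trans (totalDegree_add g1 g2) (max_le hd1 hd2))
    (π1.Js ∪ π2.Js) (by simp [π1.empty_not_mem, π2.empty_not_mem])
    (π1.r0 ++ π2.r0)
    (fun J => (if J ∈ π1.Js then π1.r J else []) ++ (if J ∈ π2.Js then π2.r J else []))
    (fun j => π1.t j + π2.t j) ?_ ?_ ?_ ?_ ?_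
  · have e1 : ∀ (πJs : Finset (Finset (Fin ℓ))) (rr : Finset (Fin ℓ) → List (MvPolynomial σ ℝ)),
        πJs ⊆ π1.Js ∪ π2.Js →
        ∑ J ∈ π1.Js ∪ π2.Js, sosOfI (if J ∈ πJs then rr J else []) * ∏ j ∈ J, q j
          = ∑ J ∈ πJs, sosOfI (rr J) * ∏ j ∈ J, q j := by
      intro πJs rr hsub
      calc ∑ J ∈ π1.Js ∪ π2.Js, sosOfI (if J ∈ πJs then rr J else []) * ∏ j ∈ J, q j
          = ∑ J ∈ π1.Js ∪ π2.Js,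
              (if J ∈ πJs then sosOfI (rr J) * ∏ j ∈ J, q j else 0) := by
            refine Finset.sum_congr rfl fun J _ => ?_
            split <;> simp [sos_nil]
        _ = ∑ J ∈ (π1.Js ∪ π2.Js) ∩ πJs, sosOfI (rr J) * ∏ j ∈ J, q j :=
            Finset.sum_ite_mem _ _ _
        _ = ∑ J ∈ πJs, sosOfI (rr J) * ∏ j ∈ J, q j := by
            rw [Finset.inter_eq_right.2 hsub]
    have key : (g1 + g2) - (sosOfI (π1.r0 ++ π2.r0)
        + ∑ J ∈ π1.Js ∪ π2.Js,
            sosOfI ((if J ∈ π1.Js then π1.r J else []) ++ (if J ∈ π2.Js then π2.r J else []))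
              * ∏ j ∈ J, q j
        + ∑ j, (π1.t j + π2.t j) * p j)
        = (g1 - (sosOfI π1.r0 + ∑ J ∈ π1.Js, sosOfI (π1.r J) * ∏ j ∈ J, q j
            + ∑ j, π1.t j * p j))
        + (g2 - (sosOfI π2.r0 + ∑ J ∈ π2.Js, sosOfI (π2.r J) * ∏ j ∈ J, q j
            + ∑ j, π2.t j * p j)) := by
      simp only [sos_append, add_mul, Finset.sum_add_distrib]
      rw [e1 π1.Js π1.r Finset.subset_union_left, e1 π2.Js π2.r Finset.subset_union_right]
      ring
    rw [key]
    exact I.add_mem π1.identity π2.identity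
  · rw [sos_append]
    exact le_trans (totalDegree_add _ _) (max_le hs1 hs2)
  · intro J hJ hne
    rw [sos_append] at hne ⊢
    refine deg_add_le ?_ ?_ hne
    · intro h
      by_cases hmem : J ∈ π1.Js
      · rw [if_pos hmem] at h ⊢; exact hJ1 J hmem h
      · rw [if_neg hmem] at h; exact absurd sos_nil h
    · intro h
      by_cases hmem : J ∈ π2.Js
      · rw [if_pos hmem] at h ⊢; exact hJ2 J hmem h
      · rw [if_neg hmem] at h; exact absurd sos_nil h
  · intro j hne
    exact deg_add_le (ht1 j) (ht2 j) hne
  · intro J hJ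
    rcases Finset.mem_union.1 hJ with h | h
    · exact hw1 J h
    · exact hw2 J h

lemma cone_mul_sq {g : MvPolynomial σ ℝ} {e D : ℕ}
    (h : g ∈ PSconeI σ ℓ m q p I c w e) (f : MvPolynomial σ ℝ)
    (hD : 2 * f.totalDegree + e ≤ D) : f ^ 2 * g ∈ PSconeI σ ℓ m q p I c w D := by
  obtain ⟨hd, π, ⟨hg, hs, hJ, ht⟩, hwd⟩ := h
  have hf2 : (f ^ 2).totalDegree ≤ 2 * f.totalDegree := totalDegree_pow f 2
  have hmul : ∀ (s : MvPolynomial σ ℝ), s.totalDegree ≤ e →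
      (f ^ 2 * s).totalDegree ≤ 2 * f.totalDegree + e := fun s hse =>
    le_trans (totalDegree_mul _ _) (add_le_add hf2 hse)
  refine mem_cone_of (le_trans (hmul g hg) hD) π.Js π.empty_not_mem
    (π.r0.map (f * ·)) (fun J => (π.r J).map (f * ·)) (fun j => f ^ 2 * π.t j) ?_ ?_ ?_ ?_ hwd
  · have key : f ^ 2 * g - (sosOfI (π.r0.map (f * ·))
        + ∑ J ∈ π.Js, sosOfI ((π.r J).map (f * ·)) * ∏ j ∈ J, q j
        + ∑ j, (f ^ 2 * π.t j) * p j)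
        = f ^ 2 * (g - (sosOfI π.r0 + ∑ J ∈ π.Js, sosOfI (π.r J) * ∏ j ∈ J, q j
            + ∑ j, π.t j * p j)) := by
      simp only [sos_map_mul, mul_sub, mul_add, Finset.mul_sum, mul_assoc]
    rw [key]
    exact Ideal.mul_mem_left _ _ π.identity
  · rw [sos_map_mul]
    exact le_trans (hmul _ hs) hD
  · intro J hJmem hne
    rw [sos_map_mul] at hne ⊢
    have hne' : sosOfI (π.r J) ≠ 0 := fun h0 => hne (by rw [h0, mul_zero])
    have h1 := hJ J hJmem hne'
    calc (f ^ 2 * sosOfI (π.r J)).totalDegree + c (Sum.inl J)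
        ≤ (2 * f.totalDegree + (sosOfI (π.r J)).totalDegree) + c (Sum.inl J) := by
          exact Nat.add_le_add_right (le_trans (totalDegree_mul _ _) (Nat.add_le_add_right hf2 _)) _
      _ ≤ 2 * f.totalDegree + e := by omega
      _ ≤ D := hD
  · intro j hne
    have hne' : π.t j ≠ 0 := fun h0 => hne (by show f ^ 2 * π.t j = 0; rw [h0, mul_zero])
    have h1 := ht j hne'
    show (f ^ 2 * π.t j).totalDegree + c (Sum.inr j) ≤ D
    calc (f ^ 2 * π.t j).totalDegree + c (Sum.inr j)
        ≤ (2 * f.totalDegree + (π.t j).totalDegree) + c (Sum.inr j) := by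
          exact Nat.add_le_add_right (le_trans (totalDegree_mul _ _) (Nat.add_le_add_right hf2 _)) _
      _ ≤ 2 * f.totalDegree + e := by omega
      _ ≤ D := hD

lemma cone_smul {g : MvPolynomial σ ℝ} {D : ℕ} {a : ℝ} (ha : 0 ≤ a)
    (h : g ∈ PSconeI σ ℓ m q p I c w D) : a • g ∈ PSconeI σ ℓ m q p I c w D := by
  have key : a • g = (C (Real.sqrt a)) ^ 2 * g := by
    rw [smul_eq_C_mul, ← map_pow, Real.sq_sqrt ha]
  rw [key]
  exact cone_mul_sq h _ (by simp [totalDegree_C])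

lemma cone_sq {D : ℕ} (f : MvPolynomial σ ℝ) (hD : 2 * f.totalDegree ≤ D) :
    f ^ 2 ∈ PSconeI σ ℓ m q p I c w D := by
  have hdeg : (f ^ 2).totalDegree ≤ D := le_trans (totalDegree_pow f 2) hD
  refine mem_cone_of hdeg ∅ (Finset.notMem_empty _) [f] (fun _ => []) (fun _ => 0)
    (by simp [sosOfI]) ?_ (by simp) (by simp) (by simp)
  · have : sosOfI [f] = f ^ 2 := by simp [sosOfI]
    rw [this]; exact hdeg

lemma cone_const {D : ℕ} {a : ℝ} (ha : 0 ≤ a) : (C a : MvPolynomial σ ℝ) ∈ PSconeI σ ℓ m q p I c w D := by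
  have key : (C a : MvPolynomial σ ℝ) = (C (Real.sqrt a)) ^ 2 := by
    rw [← map_pow, Real.sq_sqrt ha]
  rw [key]
  exact cone_sq _ (by simp [totalDegree_C])

/-- Product of the variables in a list. -/
def mon (l : List σ) : MvPolynomial σ ℝ := (l.map X).prod

lemma mon_nil : mon ([] : List σ) = 1 := rfl

lemma mon_cons (v : σ) (l : List σ) : mon (v :: l) = X v * mon l := by
  simp [mon]

lemma mon_append (l1 l2 : List σ) : mon (l1 ++ l2) = mon l1 * mon l2 := by
  simp [mon]

lemma mon_deg (l : List σ) : (mon l).totalDegree ≤ l.length := by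
  induction l with
  | nil => simp [mon_nil]
  | cons v l ih =>
    rw [mon_cons]
    calc (X v * mon l).totalDegree ≤ (X v : MvPolynomial σ ℝ).totalDegree + (mon l).totalDegree :=
        totalDegree_mul _ _
      _ ≤ 1 + l.length := by rw [totalDegree_X]; omega
      _ = (v :: l).length := by simp [add_comm]

variable {d : ℕ} {R : ℝ}

lemma cone_sq_mon (hd : 0 < d) (hR : 0 ≤ R)
    (hball : ∀ v : σ, (C R - X v ^ 2 : MvPolynomial σ ℝ) ∈ PSconeI σ ℓ m q p I c w 2)
    (l : List σ) (hlen : l.length ≤ d) :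
    (C (R ^ l.length) - (mon l) ^ 2 : MvPolynomial σ ℝ) ∈ PSconeI σ ℓ m q p I c w (2 * d) := by
  induction l with
  | nil => simpa [mon_nil] using cone_zero (q := q) (p := p) (I := I) (c := c) (w := w) (2 * d)
  | cons v l ih =>
    have hlen' : l.length ≤ d := by simp at hlen; omega
    have h1 : (mon l) ^ 2 * (C R - X v ^ 2) ∈ PSconeI σ ℓ m q p I c w (2 * d) := by
      refine cone_mul_sq (hball v) (mon l) ?_
      have := mon_deg l
      simp at hlen
      omega
    have h2 : R • (C (R ^ l.length) - (mon l) ^ 2 : MvPolynomial σ ℝ)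
        ∈ PSconeI σ ℓ m q p I c w (2 * d) := cone_smul hR (ih hlen')
    have key : (C (R ^ (v :: l).length) - (mon (v :: l)) ^ 2 : MvPolynomial σ ℝ)
        = (mon l) ^ 2 * (C R - X v ^ 2) + R • (C (R ^ l.length) - (mon l) ^ 2) := by
      rw [smul_eq_C_mul, mon_cons, List.length_cons, pow_succ, map_mul]
      ring
    rw [key]
    exact cone_add h1 h2

lemma bd_mon (hd : 0 < d) (hR : 0 ≤ R)
    (hball : ∀ v : σ, (C R - X v ^ 2 : MvPolynomial σ ℝ) ∈ PSconeI σ ℓ m q p I c w 2)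
    (l : List σ) (hlen : l.length ≤ 2 * d) :
    ∃ M : ℝ, 0 ≤ M ∧ (C M - mon l : MvPolynomial σ ℝ) ∈ PSconeI σ ℓ m q p I c w (2 * d)
      ∧ (C M + mon l : MvPolynomial σ ℝ) ∈ PSconeI σ ℓ m q p I c w (2 * d) := by
  set l1 := l.take d with hl1
  set l2 := l.drop d with hl2
  have hlen1 : l1.length ≤ d := by simp [hl1]
  have hlen2 : l2.length ≤ d := by simp [hl2]; omega
  have hsplit : mon l = mon l1 * mon l2 := by rw [← mon_append, List.take_append_drop]
  set u1 := mon l1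
  set u2 := mon l2
  have hdu1 : u1.totalDegree ≤ d := le_trans (mon_deg l1) hlen1
  have hdu2 : u2.totalDegree ≤ d := le_trans (mon_deg l2) hlen2
  have hc1 := cone_sq_mon hd hR hball l1 hlen1
  have hc2 := cone_sq_mon hd hR hball l2 hlen2
  refine ⟨(R ^ l1.length + R ^ l2.length) / 2, by positivity, ?_, ?_⟩
  · have hsq : ((u1 - u2) ^ 2 : MvPolynomial σ ℝ) ∈ PSconeI σ ℓ m q p I c w (2 * d) := by
      refine cone_sq _ ?_
      have : (u1 - u2).totalDegree ≤ max u1.totalDegree u2.totalDegree := by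
        rw [sub_eq_add_neg]
        refine le_trans (totalDegree_add _ _) ?_
        rw [totalDegree_neg]
      have : (u1 - u2).totalDegree ≤ d := le_trans this (max_le hdu1 hdu2)
      omega
    have hsum := cone_smul (a := (2:ℝ)⁻¹) (by norm_num)
      (cone_add hsq (cone_add hc1 hc2))
    have key : (C ((R ^ l1.length + R ^ l2.length) / 2) - mon l : MvPolynomial σ ℝ)
        = (2:ℝ)⁻¹ • ((u1 - u2) ^ 2 + ((C (R ^ l1.length) - u1 ^ 2)
            + (C (R ^ l2.length) - u2 ^ 2))) := by
      rw [smul_eq_C_mul, hsplit, show ((R ^ l1.length + R ^ l2.length) / 2)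
        = 2⁻¹ * (R ^ l1.length + R ^ l2.length) by ring, map_mul, map_add]
      have h2 : (C (2:ℝ)⁻¹ : MvPolynomial σ ℝ) * 2 = 1 := by
        rw [show (2 : MvPolynomial σ ℝ) = C 2 from (map_ofNat C 2).symm, ← map_mul]
        norm_num
      linear_combination (mon l1 * mon l2) * h2
    rw [key]
    exact hsum
  · have hsq : ((u1 + u2) ^ 2 : MvPolynomial σ ℝ) ∈ PSconeI σ ℓ m q p I c w (2 * d) := by
      refine cone_sq _ ?_
      have : (u1 + u2).totalDegree ≤ d := le_trans (totalDegree_add _ _) (max_le hdu1 hdu2)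
      omega
    have hsum := cone_smul (a := (2:ℝ)⁻¹) (by norm_num)
      (cone_add hsq (cone_add hc1 hc2))
    have key : (C ((R ^ l1.length + R ^ l2.length) / 2) + mon l : MvPolynomial σ ℝ)
        = (2:ℝ)⁻¹ • ((u1 + u2) ^ 2 + ((C (R ^ l1.length) - u1 ^ 2)
            + (C (R ^ l2.length) - u2 ^ 2))) := by
      rw [smul_eq_C_mul, hsplit, show ((R ^ l1.length + R ^ l2.length) / 2)
        = 2⁻¹ * (R ^ l1.length + R ^ l2.length) by ring, map_mul, map_add]
      have h2 : (C (2:ℝ)⁻¹ : MvPolynomial σ ℝ) * 2 = 1 := by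
        rw [show (2 : MvPolynomial σ ℝ) = C 2 from (map_ofNat C 2).symm, ← map_mul]
        norm_num
      linear_combination (-(mon l1 * mon l2)) * h2
    rw [key]
    exact hsum

lemma exists_mon (α : σ →₀ ℕ) :
    ∃ l : List σ, l.length = (α.sum fun _ n => n) ∧ mon l = monomial α 1 := by
  classical
  induction α using Finsupp.induction with
  | zero => exact ⟨[], by simp, by simp [mon_nil, monomial_zero']⟩
  | single_add a n f ha hn ih =>
    obtain ⟨l, hlen, hmon⟩ := ih
    refine ⟨List.replicate n a ++ l, ?_, ?_⟩
    · rw [List.length_append, List.length_replicate, hlen,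
        Finsupp.sum_add_index' (by simp) (by intros; rfl), Finsupp.sum_single_index rfl]
    · rw [mon_append, hmon, monomial_single_add]
      congr 1
      simp [mon, List.prod_replicate]

/-- `g` is certified bounded: `C M ± g` both lie in the cone. -/
def BdP (D : ℕ) (q : Fin ℓ → MvPolynomial σ ℝ) (p : Fin m → MvPolynomial σ ℝ)
    (I : Ideal (MvPolynomial σ ℝ)) (c : Finset (Fin ℓ) ⊕ Fin m → ℕ) (w : ℕ)
    (g : MvPolynomial σ ℝ) : Prop :=
  ∃ M : ℝ, 0 ≤ M ∧ (C M - g) ∈ PSconeI σ ℓ m q p I c w D ∧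
    (C M + g) ∈ PSconeI σ ℓ m q p I c w D

lemma bd_zero {D : ℕ} : BdP D q p I c w (0 : MvPolynomial σ ℝ) :=
  ⟨0, le_refl _, by simpa using cone_zero D, by simpa using cone_zero D⟩

lemma bd_add {D : ℕ} {g1 g2 : MvPolynomial σ ℝ} (h1 : BdP D q p I c w g1)
    (h2 : BdP D q p I c w g2) : BdP D q p I c w (g1 + g2) := by
  obtain ⟨M1, hM1, hm1, hp1⟩ := h1
  obtain ⟨M2, hM2, hm2, hp2⟩ := h2
  refine ⟨M1 + M2, by linarith, ?_, ?_⟩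
  · have := cone_add hm1 hm2
    rw [show (C M1 - g1) + (C M2 - g2) = C (M1 + M2) - (g1 + g2) by rw [map_add]; ring] at this
    exact this
  · have := cone_add hp1 hp2
    rw [show (C M1 + g1) + (C M2 + g2) = C (M1 + M2) + (g1 + g2) by rw [map_add]; ring] at this
    exact this

lemma bd_smul {D : ℕ} {g : MvPolynomial σ ℝ} (a : ℝ) (h : BdP D q p I c w g) :
    BdP D q p I c w (a • g) := by
  obtain ⟨M, hM, hm, hp⟩ := h
  rcases le_or_gt 0 a with ha | ha
  · refine ⟨a * M, mul_nonneg ha hM, ?_, ?_⟩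
    · have := cone_smul ha hm
      rw [show a • (C M - g) = C (a * M) - a • g by
        rw [smul_eq_C_mul, smul_eq_C_mul, map_mul]; ring] at this
      exact this
    · have := cone_smul ha hp
      rw [show a • (C M + g) = C (a * M) + a • g by
        rw [smul_eq_C_mul, smul_eq_C_mul, map_mul]; ring] at this
      exact this
  · have ha' : 0 ≤ -a := by linarith
    refine ⟨(-a) * M, mul_nonneg ha' hM, ?_, ?_⟩
    · have := cone_smul ha' hp
      rw [show (-a) • (C M + g) = C ((-a) * M) - a • g by
        rw [smul_eq_C_mul, smul_eq_C_mul, map_mul, map_neg]; ring] at this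
      exact this
    · have := cone_smul ha' hm
      rw [show (-a) • (C M - g) = C ((-a) * M) + a • g by
        rw [smul_eq_C_mul, smul_eq_C_mul, map_mul, map_neg]; ring] at this
      exact this

variable (q p I c w) in
lemma bd_of_deg (hd : 0 < d) (hR : 0 ≤ R)
    (hball : ∀ v : σ, (C R - X v ^ 2 : MvPolynomial σ ℝ) ∈ PSconeI σ ℓ m q p I c w 2)
    (g : MvPolynomial σ ℝ) (hdeg : g.totalDegree ≤ 2 * d) :
    BdP (2 * d) q p I c w g := by
  have hmono : ∀ α ∈ g.support, BdP (2 * d) q p I c w (monomial α (coeff α g)) := by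
    intro α hα
    obtain ⟨l, hlen, hmon⟩ := exists_mon α
    have hlen' : l.length ≤ 2 * d := by
      rw [hlen]; exact le_trans (le_totalDegree hα) hdeg
    obtain ⟨M, hM, hm, hp'⟩ := bd_mon hd hR hball l hlen'
    have : monomial α (coeff α g) = (coeff α g) • mon l := by
      rw [hmon, smul_monomial, smul_eq_mul, mul_one]
    rw [this]
    exact bd_smul _ ⟨M, hM, hm, hp'⟩
  have := Finset.sum_induction (fun α => monomial α (coeff α g))
    (BdP (2 * d) q p I c w) (fun a b ha hb => bd_add ha hb) bd_zero hmono
  rwa [support_sum_monomial_coeff] at this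

variable (σ) in
/-- The constant polynomial `1` as an element of the degree-restricted space. -/
def onePoly (D : ℕ) : restrictTotalDegree σ ℝ D :=
  ⟨1, by rw [mem_restrictTotalDegree]; simp⟩

lemma onePoly_coe (D : ℕ) : ((onePoly σ D : restrictTotalDegree σ ℝ D) : MvPolynomial σ ℝ) = 1 :=
  rfl

lemma onePoly_ne_zero (D : ℕ) : onePoly σ D ≠ 0 := by
  intro h
  have : ((onePoly σ D : restrictTotalDegree σ ℝ D) : MvPolynomial σ ℝ) = 0 := by
    rw [h]; rfl
  rw [onePoly_coe] at this
  exact one_ne_zero this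

lemma weak_dual {D : ℕ} {E : restrictTotalDegree σ ℝ D →ₗ[ℝ] ℝ}
    (hE : E ∈ PseudoExpI σ ℓ m q p I c w D) (P : restrictTotalDegree σ ℝ D) {r : ℝ}
    (hr : (P : MvPolynomial σ ℝ) - C r ∈ PSconeI σ ℓ m q p I c w D) : r ≤ E P := by
  have hcoe : ((P - r • onePoly σ D : restrictTotalDegree σ ℝ D) : MvPolynomial σ ℝ)
      = (P : MvPolynomial σ ℝ) - C r := by
    push_cast [onePoly_coe]
    rw [smul_eq_C_mul, mul_one]
  have h0 := hE.2 (P - r • onePoly σ D) (by rw [hcoe]; exact hr)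
  have hone := hE.1 (onePoly σ D) (onePoly_coe D)
  rw [map_sub, map_smul, smul_eq_mul, hone, mul_one] at h0
  linarith

set_option maxHeartbeats 1000000 in
variable (q p I c w) in
lemma exists_min_pexp (hd : 0 < d) (hR : 0 ≤ R)
    (hball : ∀ v : σ, (C R - X v ^ 2 : MvPolynomial σ ℝ) ∈ PSconeI σ ℓ m q p I c w 2)
    (P : restrictTotalDegree σ ℝ (2 * d))
    (hSne : {r : ℝ | (P : MvPolynomial σ ℝ) - C r ∈ PSconeI σ ℓ m q p I c w (2 * d)}.Nonempty)
    (hSbdd : BddAbove {r : ℝ | (P : MvPolynomial σ ℝ) - C r ∈ PSconeI σ ℓ m q p I c w (2 * d)}) :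
    ∃ E ∈ PseudoExpI σ ℓ m q p I c w (2 * d),
      E P = sSup {r : ℝ | (P : MvPolynomial σ ℝ) - C r ∈ PSconeI σ ℓ m q p I c w (2 * d)} := by
  classical
  set S := {r : ℝ | (P : MvPolynomial σ ℝ) - C r ∈ PSconeI σ ℓ m q p I c w (2 * d)} with hS
  set s := sSup S with hs
  -- no strictly negative constant is in the cone
  have negconst : ∀ a : ℝ, a < 0 → (C a : MvPolynomial σ ℝ) ∉ PSconeI σ ℓ m q p I c w (2 * d) := by
    intro a ha hCa
    obtain ⟨r0, hr0⟩ := hSne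
    obtain ⟨b, hb⟩ := hSbdd
    set r := max (b + 1) r0 with hr
    have hrS : r ∈ S := by
      have ht : 0 ≤ (r0 - r) / a := by
        have h1 : r0 ≤ r := le_max_right _ _
        rw [div_nonneg_iff]
        right
        constructor <;> linarith
      have hmem := cone_add hr0 (cone_smul ht hCa)
      have : ((P : MvPolynomial σ ℝ) - C r0) + ((r0 - r) / a) • C a = (P : MvPolynomial σ ℝ) - C r := by
        rw [smul_eq_C_mul, ← map_mul, div_mul_cancel₀ _ (ne_of_lt ha), map_sub]
        ring
      rwa [this] at hmem
    have := hb hrS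
    have : b + 1 ≤ r := le_max_left _ _
    linarith
  set u : restrictTotalDegree σ ℝ (2 * d) := P - s • onePoly σ (2 * d) with hu
  have hu_coe : (u : MvPolynomial σ ℝ) = (P : MvPolynomial σ ℝ) - C s := by
    push_cast [hu, onePoly_coe]
    rw [smul_eq_C_mul, mul_one]
  -- the extended cone
  set KE : ConvexCone ℝ (restrictTotalDegree σ ℝ (2 * d)) :=
    { carrier := {x | ∃ g : restrictTotalDegree σ ℝ (2 * d),
        (g : MvPolynomial σ ℝ) ∈ PSconeI σ ℓ m q p I c w (2 * d) ∧
        ∃ t : ℝ, 0 ≤ t ∧ x = g + t • (-u)},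
      smul_mem' := by
        rintro a ha x ⟨g, hg, t, ht, rfl⟩
        refine ⟨a • g, ?_, a * t, mul_nonneg (le_of_lt ha) ht, ?_⟩
        · have : ((a • g : restrictTotalDegree σ ℝ (2 * d)) : MvPolynomial σ ℝ) = a • ↑g := rfl
          rw [this]
          exact cone_smul (le_of_lt ha) hg
        · rw [smul_add, smul_smul]
      add_mem' := by
        rintro x ⟨g1, hg1, t1, ht1, rfl⟩ y ⟨g2, hg2, t2, ht2, rfl⟩
        refine ⟨g1 + g2, ?_, t1 + t2, by linarith, ?_⟩
        · have : ((g1 + g2 : restrictTotalDegree σ ℝ (2 * d)) : MvPolynomial σ ℝ)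
            = ↑g1 + ↑g2 := rfl
          rw [this]
          exact cone_add hg1 hg2
        · rw [add_smul]; abel } with hKE
  have memKE : ∀ x : restrictTotalDegree σ ℝ (2 * d), x ∈ KE ↔
      ∃ g : restrictTotalDegree σ ℝ (2 * d),
        (g : MvPolynomial σ ℝ) ∈ PSconeI σ ℓ m q p I c w (2 * d) ∧
        ∃ t : ℝ, 0 ≤ t ∧ x = g + t • (-u) := fun x => Iff.rfl
  set f := LinearPMap.mkSpanSingleton (K := ℝ) (L := ℝ) (σ := RingHom.id ℝ) (onePoly σ (2 * d)) (1 : ℝ) (onePoly_ne_zero _)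
    with hf
  have hdom : f.domain = ℝ ∙ onePoly σ (2 * d) := rfl
  have hnonneg : ∀ x : f.domain, (x : restrictTotalDegree σ ℝ (2 * d)) ∈ KE → 0 ≤ f x := by
    rintro ⟨x, hx⟩ hxK
    obtain ⟨a, ha⟩ := Submodule.mem_span_singleton.1 (show x ∈ ℝ ∙ onePoly σ (2 * d) from hx)
    have hmem' : a • onePoly σ (2 * d) ∈ f.domain :=
      Submodule.smul_mem _ _ (Submodule.mem_span_singleton_self _)
    have heq : (⟨x, hx⟩ : f.domain) = ⟨a • onePoly σ (2 * d), hmem'⟩ := Subtype.ext ha.symm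
    have hfx : f ⟨x, hx⟩ = a := by
      rw [heq]
      exact (LinearPMap.mkSpanSingleton'_apply _ _ _ a _).trans (by rw [smul_eq_mul, mul_one, RingHom.id_apply])
    rw [hfx]
    obtain ⟨g, hg, t, ht, hx_eq⟩ := (memKE x).1 hxK
    -- ↑g = C a + t • (↑P - C s)
    have hg_coe : (g : MvPolynomial σ ℝ) = C a + t • ((P : MvPolynomial σ ℝ) - C s) := by
      have : g = x + t • u := by
        rw [hx_eq]; rw [smul_neg]; abel
      rw [this]
      push_cast [hu_coe]
      rw [← ha]
      push_cast [onePoly_coe]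
      rw [smul_eq_C_mul, mul_one]
    by_contra hlt
    push_neg at hlt
    rcases eq_or_lt_of_le ht with hteq | htpos
    · -- t = 0 : C a ∈ cone, a < 0
      rw [← hteq, zero_smul, add_zero] at hg_coe
      exact negconst a hlt (hg_coe ▸ hg)
    · -- t > 0 : P - C (s - a/t) ∈ cone with s - a/t > s
      have h1 := cone_smul (le_of_lt (inv_pos.2 htpos)) hg
      have h2 : t⁻¹ • (g : MvPolynomial σ ℝ) = (P : MvPolynomial σ ℝ) - C (s - a / t) := by
        rw [hg_coe, smul_add, smul_smul, inv_mul_cancel₀ (ne_of_gt htpos), one_smul,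
          smul_eq_C_mul, ← map_mul, inv_mul_eq_div, map_sub]
        ring
      rw [h2] at h1
      have hmemS : s - a / t ∈ S := h1
      have hle := le_csSup hSbdd hmemS
      have : 0 < -a / t := div_pos (by linarith) htpos
      rw [← hs] at hle
      have : s < s - a / t := by
        have : -a / t = -(a / t) := by ring
        linarith [div_pos (show (0:ℝ) < -a by linarith) htpos]
      linarith
  have hdense : ∀ y : restrictTotalDegree σ ℝ (2 * d),
      ∃ x : f.domain, (x : restrictTotalDegree σ ℝ (2 * d)) + y ∈ KE := by
    intro y
    have hydeg : (y : MvPolynomial σ ℝ).totalDegree ≤ 2 * d := by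
      have := y.2
      rw [mem_restrictTotalDegree] at this
      exact this
    obtain ⟨M, hM, -, hMp⟩ := bd_of_deg q p I c w hd hR hball (y : MvPolynomial σ ℝ) hydeg
    refine ⟨⟨M • onePoly σ (2 * d), by
        rw [hdom]; exact Submodule.smul_mem _ _ (Submodule.mem_span_singleton_self _)⟩, ?_⟩
    refine (memKE _).2 ⟨M • onePoly σ (2 * d) + y, ?_, 0, le_refl _, by rw [zero_smul, add_zero]⟩
    have : ((M • onePoly σ (2 * d) + y : restrictTotalDegree σ ℝ (2 * d)) : MvPolynomial σ ℝ)
        = C M + (y : MvPolynomial σ ℝ) := by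
      push_cast [onePoly_coe]
      rw [smul_eq_C_mul, mul_one]
    rw [this]
    exact hMp
  obtain ⟨E, hEf, hEK⟩ := riesz_extension (KE.toPointedCone ((memKE 0).2 ⟨0, by
      have : ((0 : restrictTotalDegree σ ℝ (2 * d)) : MvPolynomial σ ℝ) = 0 := rfl
      rw [this]; exact cone_zero _, 0, le_refl _, by rw [zero_smul, add_zero]⟩)) f hnonneg hdense
  have hEone : E (onePoly σ (2 * d)) = 1 := by
    have := hEf ⟨onePoly σ (2 * d), by
      rw [hdom]; exact Submodule.mem_span_singleton_self _⟩
    rw [this]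
    exact LinearPMap.mkSpanSingleton'_apply_self _ _ _ _
  have hEmem : E ∈ PseudoExpI σ ℓ m q p I c w (2 * d) := by
    constructor
    · intro g hg
      have : g = onePoly σ (2 * d) := Subtype.ext (by rw [hg, onePoly_coe])
      rw [this, hEone]
    · intro g hg
      refine hEK g ((memKE g).2 ⟨g, hg, 0, le_refl _, by rw [zero_smul, add_zero]⟩)
  refine ⟨E, hEmem, le_antisymm ?_ ?_⟩
  · -- E P ≤ s
    have hnegu : -u ∈ KE := (memKE _).2 ⟨0, by
        have : ((0 : restrictTotalDegree σ ℝ (2 * d)) : MvPolynomial σ ℝ) = 0 := rfl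
        rw [this]; exact cone_zero _, 1, zero_le_one, by rw [one_smul, zero_add]⟩
    have h0 := hEK _ hnegu
    rw [map_neg] at h0
    have hEu : E u ≤ 0 := by linarith
    have : E u = E P - s * E (onePoly σ (2 * d)) := by
      rw [hu, map_sub, map_smul, smul_eq_mul]
    rw [this, hEone, mul_one] at hEu
    linarith
  · -- s ≤ E P
    refine csSup_le hSne fun r hr => weak_dual hEmem P hr

lemma coe_csSup_le {S : Set ℝ} (hne : S.Nonempty) :
    ((sSup S : ℝ) : EReal) ≤ sSup ((fun r : ℝ => (r : EReal)) '' S) := by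
  refine le_sSup_iff.2 ?_
  rintro b hb
  induction b using EReal.rec with
  | bot =>
    obtain ⟨r, hr⟩ := hne
    have := hb ⟨r, hr, rfl⟩
    simp at this
  | coe b' =>
    exact EReal.coe_le_coe_iff.2 (csSup_le hne fun r hr => EReal.coe_le_coe_iff.1 (hb ⟨r, hr, rfl⟩))
  | top => exact le_top

end PSAux

/-- **Corollary (zero-gap duality for PS mod an ideal).** If `Q ⊢^{c,I}_{w,2} R − x² ≥ 0`
for every variable `x` and some `R ≥ 0`, then
`sup{r : Q ⊢^{c,I}_{w,2d} p ≥ r} = inf{E(p) : E ∈ ℰ^{c,I}_{w,2d}(Q)}` in `ℝ ∪ {±∞}`,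
and if `ℰ^{c,I}_{w,2d}(Q)` is nonempty the infimum is attained. -/
theorem statement16 (d : ℕ) (hd : 0 < d) (σ : Type) (ℓ m : ℕ)
    (q : Fin ℓ → MvPolynomial σ ℝ) (p : Fin m → MvPolynomial σ ℝ)
    (c : Finset (Fin ℓ) ⊕ Fin m → ℕ) (hc : IsCutoffI q p c) (w : ℕ) (hw : 0 < w)
    (I : Ideal (MvPolynomial σ ℝ))
    (R : ℝ) (hR : 0 ≤ R)
    (hball : ∀ v : σ, (C R - X v ^ 2 : MvPolynomial σ ℝ) ∈ PSconeI σ ℓ m q p I c w 2)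
    (P : restrictTotalDegree σ ℝ (2 * d)) :
    sSup ((fun r : ℝ => (r : EReal)) ''
        {r : ℝ | (P : MvPolynomial σ ℝ) - C r ∈ PSconeI σ ℓ m q p I c w (2 * d)})
      = sInf ((fun E : restrictTotalDegree σ ℝ (2 * d) →ₗ[ℝ] ℝ =>
          ((E P : ℝ) : EReal)) '' PseudoExpI σ ℓ m q p I c w (2 * d)) ∧
    ((PseudoExpI σ ℓ m q p I c w (2 * d)).Nonempty →
      ∃ E ∈ PseudoExpI σ ℓ m q p I c w (2 * d),
        ∀ E' ∈ PseudoExpI σ ℓ m q p I c w (2 * d), E P ≤ E' P) := by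
  classical
  set S := {r : ℝ | (P : MvPolynomial σ ℝ) - C r ∈ PSconeI σ ℓ m q p I c w (2 * d)} with hS
  have hPdeg : (P : MvPolynomial σ ℝ).totalDegree ≤ 2 * d := by
    have := P.2
    rwa [mem_restrictTotalDegree] at this
  have hSne : S.Nonempty := by
    obtain ⟨M, hM, -, hMp⟩ := PSAux.bd_of_deg q p I c w hd hR hball _ hPdeg
    refine ⟨-M, ?_⟩
    show (P : MvPolynomial σ ℝ) - C (-M) ∈ PSconeI σ ℓ m q p I c w (2 * d)
    rw [map_neg, sub_neg_eq_add, add_comm]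
    exact hMp
  by_cases hbdd : BddAbove S
  · obtain ⟨E, hE, hEP⟩ := PSAux.exists_min_pexp q p I c w hd hR hball P hSne hbdd
    have hlb : ∀ E' ∈ PseudoExpI σ ℓ m q p I c w (2 * d), sSup S ≤ E' P := fun E' hE' =>
      csSup_le hSne fun r hr => PSAux.weak_dual hE' P hr
    constructor
    · apply le_antisymm
      · refine sSup_le ?_
        rintro x ⟨r, hr, rfl⟩
        refine le_sInf ?_
        rintro b ⟨E', hE', rfl⟩
        exact EReal.coe_le_coe_iff.2 (le_trans (le_csSup hbdd hr) (hlb E' hE'))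
      · refine le_trans (sInf_le ⟨E, hE, rfl⟩) ?_
        show ((E P : ℝ) : EReal) ≤ sSup ((fun r : ℝ => (r : EReal)) '' S)
        rw [hEP]
        exact PSAux.coe_csSup_le hSne
    · intro _
      exact ⟨E, hE, fun E' hE' => hEP ▸ hlb E' hE'⟩
  · have hempty : PseudoExpI σ ℓ m q p I c w (2 * d) = ∅ := by
      rw [Set.eq_empty_iff_forall_notMem]
      intro E' hE'
      exact hbdd ⟨E' P, fun r hr => PSAux.weak_dual hE' P hr⟩
    constructor
    · rw [hempty, Set.image_empty, sInf_empty]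
      rw [sSup_eq_top]
      intro b hb
      induction b using EReal.rec with
      | bot =>
        obtain ⟨r, hr⟩ := hSne
        exact ⟨(r : EReal), ⟨r, hr, rfl⟩, EReal.bot_lt_coe r⟩
      | coe b' =>
        obtain ⟨r, hr, hltr⟩ := not_bddAbove_iff.1 hbdd b'
        exact ⟨(r : EReal), ⟨r, hr, rfl⟩, EReal.coe_lt_coe_iff.2 hltr⟩
      | top => exact absurd hb (lt_irrefl _)
    · rintro ⟨E0, hE0⟩
      rw [hempty] at hE0
      exact absurd hE0 (Set.notMem_empty _)
end
end
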